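/- Let S and S' be finite multisets of binary-labeled examples, and define the relative edit distance Δ*(S,S') = Δ(S,S') / max(|S|,|S'|), where Δ is the (insertion/deletion) edit distance. Then |g(S) − g(S')| ≤ 2.5 · Δ*(S,S'), where g is the Gini index (with g(∅) = 0). -/

import Mathlib

open Classical in
/-- The Gini index of a multiset of binary-labeled examples:
`2 p (1-p)` where `p` is the fraction of `true` labels; `0` for the empty multiset. -/
noncomputable def gini {α : Type*} (S : Multiset (α × Bool)) : ℝ :=
  if S = 0 then 0 else
    let p : ℝ := ((S.filter fun e => e.2 = true).card : ℝ) / S.card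
    2 * p * (1 - p)

/-- `EditPath n S S'` holds iff `S'` can be obtained from `S` by a sequence of `n`
single-element insertions and deletions. -/
def EditPath {α : Type*} : ℕ → Multiset α → Multiset α → Prop
  | 0, S, S' => S = S'
  | n + 1, S, S' => ∃ T : Multiset α, ((∃ a, T = a ::ₘ S) ∨ (∃ a, S = a ::ₘ T)) ∧ EditPath n T S'

/-- The edit distance between two multisets: the minimum number of single-element
insertions and deletions transforming one into the other. -/
noncomputable def editDist {α : Type*} (S S' : Multiset α) : ℕ :=
  sInf {n | EditPath n S S'}

section paths
variable {α : Type*}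

lemma editPath_cons (a : α) : ∀ {n : ℕ} {S T : Multiset α},
    EditPath n S T → EditPath n (a ::ₘ S) (a ::ₘ T) := by
  intro n
  induction n with
  | zero => intro S T h; exact congrArg (a ::ₘ ·) h
  | succ n ih =>
    rintro S T ⟨U, hU, hp⟩
    refine ⟨a ::ₘ U, ?_, ih hp⟩
    rcases hU with ⟨b, rfl⟩ | ⟨b, rfl⟩
    · exact Or.inl ⟨b, (Multiset.cons_swap b a S).symm⟩
    · exact Or.inr ⟨b, (Multiset.cons_swap b a U).symm⟩

lemma editPath_trans {n : ℕ} : ∀ {m : ℕ} {S T U : Multiset α},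
    EditPath m S T → EditPath n T U → EditPath (m + n) S U := by
  intro m
  induction m with
  | zero => intro S T U h h2; cases h; simpa using h2
  | succ m ih =>
    rintro S T U ⟨V, hV, hp⟩ h2
    rw [Nat.succ_add]
    exact ⟨V, hV, ih hp h2⟩

lemma editPath_to_zero : ∀ (S : Multiset α), EditPath S.card S 0 := by
  intro S
  induction S using Multiset.induction_on with
  | empty => rfl
  | cons a T ih => simpa using ⟨T, Or.inr ⟨a, rfl⟩, ih⟩

lemma editPath_from_zero : ∀ (S : Multiset α), EditPath S.card 0 S := by
  intro S
  induction S using Multiset.induction_on with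
  | empty => rfl
  | cons a T ih =>
    simp only [Multiset.card_cons]
    exact ⟨a ::ₘ 0, Or.inl ⟨a, rfl⟩, editPath_cons a ih⟩

lemma editPath_exists (S S' : Multiset α) : EditPath (S.card + S'.card) S S' :=
  editPath_trans (editPath_to_zero S) (editPath_from_zero S')

variable [DecidableEq α]

lemma inter_mono {S1 S2 T1 T2 : Multiset α} (h1 : S1 ≤ S2) (h2 : T1 ≤ T2) :
    S1 ∩ T1 ≤ S2 ∩ T2 :=
  Multiset.le_inter (Multiset.inter_le_left.trans h1)
    (Multiset.inter_le_right.trans h2)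

lemma editPath_card_bound : ∀ {m : ℕ} {S S' : Multiset α},
    EditPath m S S' → S.card + S'.card ≤ m + 2 * (S ∩ S').card := by
  intro m
  induction m with
  | zero => intro S S' h; cases h; rw [show S ∩ S = S from inf_idem S]; omega
  | succ m ih =>
    rintro S S' ⟨T, hT, hp⟩
    have hIH := ih hp
    rcases hT with ⟨a, rfl⟩ | ⟨a, rfl⟩
    · have h1 : ((a ::ₘ S) ∩ S').card ≤ (S ∩ S').card + 1 := by
        by_cases ha : a ∈ S'
        · rw [Multiset.cons_inter_of_pos _ ha, Multiset.card_cons]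
          exact Nat.add_le_add_right
            (Multiset.card_le_card (inter_mono le_rfl (Multiset.erase_le a S'))) 1
        · rw [Multiset.cons_inter_of_neg _ ha]; omega
      simp only [Multiset.card_cons] at hIH
      omega
    · have h1 : (T ∩ S').card ≤ ((a ::ₘ T) ∩ S').card :=
        Multiset.card_le_card (inter_mono (Multiset.le_cons_self T a) le_rfl)
      simp only [Multiset.card_cons]
      omega

lemma editDist_bound (S S' : Multiset α) :
    S.card + S'.card ≤ editDist S S' + 2 * (S ∩ S').card := by
  have hne : {n | EditPath n S S'}.Nonempty := ⟨_, editPath_exists S S'⟩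
  exact editPath_card_bound (Nat.sInf_mem hne)

end paths

/-- The Gini function `2p(1-p)` is 2-Lipschitz on `[0,1]`. -/
lemma gini_lip {p q : ℝ} (hp0 : 0 ≤ p) (hp1 : p ≤ 1) (hq0 : 0 ≤ q) (hq1 : q ≤ 1) :
    |2*p*(1-p) - 2*q*(1-q)| ≤ 2 * |p - q| := by
  have h : 2*p*(1-p) - 2*q*(1-q) = (2*(p-q)) * (1-(p+q)) := by ring
  rw [h, abs_mul]
  have h2 : |1 - (p+q)| ≤ 1 := abs_le.2 ⟨by linarith, by linarith⟩
  calc |2*(p-q)| * |1-(p+q)| ≤ |2*(p-q)| * 1 :=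
        mul_le_mul_of_nonneg_left h2 (abs_nonneg _)
    _ = 2 * |p - q| := by rw [mul_one, abs_mul, abs_two]

lemma gini_range {p : ℝ} (hp0 : 0 ≤ p) (hp1 : p ≤ 1) :
    0 ≤ 2*p*(1-p) ∧ 2*p*(1-p) ≤ 1/2 := by
  constructor
  · nlinarith
  · nlinarith [sq_nonneg (2*p - 1)]

/-- The main analytic estimate. -/
lemma key_est (t a b j k k' : ℝ) (hj0 : 0 ≤ j) (hjt : j ≤ t) (hjk : j ≤ k)
    (hka : k ≤ j + a) (hjk' : j ≤ k') (hkb : k' ≤ j + b)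
    (ha : 0 ≤ a) (hb : 0 ≤ b) (hab : b ≤ a)
    (hk : k ≤ t + a) (hk' : k' ≤ t + b) :
    |2*(k/(t+a))*(1-k/(t+a)) - 2*(k'/(t+b))*(1-k'/(t+b))| ≤ 2.5 * ((a+b)/(t+a)) := by
  have ht0 : 0 ≤ t := hj0.trans hjt
  rcases eq_or_lt_of_le (by linarith : (0:ℝ) ≤ t + a) with hn | hn
  · have ht : t = 0 := by linarith
    have haz : a = 0 := by linarith
    have hbz : b = 0 := by linarith
    have hkz : k = 0 := by nlinarith
    have hkz' : k' = 0 := by nlinarith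
    simp [ht, haz, hbz, hkz, hkz']
  · have hp0 : 0 ≤ k/(t+a) := div_nonneg (by linarith) (by linarith)
    have hp1 : k/(t+a) ≤ 1 := (div_le_one hn).2 hk
    have hq0 : 0 ≤ k'/(t+b) := div_nonneg (by linarith) (by linarith)
    have hq1 : k'/(t+b) ≤ 1 := by
      rcases eq_or_lt_of_le (by linarith : (0:ℝ) ≤ t + b) with h | h
      · rw [← h, div_zero]; norm_num
      · exact (div_le_one h).2 hk'
    by_cases hcase : t ≤ 4*a + 5*b
    · obtain ⟨hA0, hA1⟩ := gini_range hp0 hp1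
      obtain ⟨hB0, hB1⟩ := gini_range hq0 hq1
      have hlhs : |2*(k/(t+a))*(1-k/(t+a)) - 2*(k'/(t+b))*(1-k'/(t+b))| ≤ 1/2 :=
        abs_le.2 ⟨by linarith, by linarith⟩
      have hrhs : (1:ℝ)/2 ≤ 2.5 * ((a+b)/(t+a)) := by
        rw [mul_div_assoc'] at *
        rw [le_div_iff₀ hn]
        linarith
      linarith
    · push_neg at hcase
      have hn' : (0:ℝ) < t + b := by linarith
      have ht : (0:ℝ) < t := by linarith
      have step : ∀ c m n : ℝ, 0 ≤ c → j ≤ m → m ≤ j + c → 0 < t + c →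
          |m/(t+c) - j/t| ≤ c/(t+c) := by
        intro c m n hc hjm hmc htc
        rw [abs_sub_le_iff]
        constructor
        · have h1 : m/(t+c) ≤ (j+c)/(t+c) := by gcongr
          have h2 : j/(t+c) ≤ j/t := by gcongr; linarith
          have h3 : (j+c)/(t+c) = j/(t+c) + c/(t+c) := add_div _ _ _
          linarith
        · have h1 : j/t ≤ (j+c)/(t+c) := by
            rw [div_le_div_iff₀ ht htc]; nlinarith
          have h2 : j/(t+c) ≤ m/(t+c) := by gcongr
          have h3 : (j+c)/(t+c) = j/(t+c) + c/(t+c) := add_div _ _ _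
          linarith
      have hr0 : 0 ≤ j/t := div_nonneg hj0 ht.le
      have hr1 : j/t ≤ 1 := (div_le_one ht).2 hjt
      have hstep1 := step a k k ha hjk hka hn
      have hstep2 := step b k' k' hb hjk' hkb hn'
      have hL1 := gini_lip hp0 hp1 hr0 hr1
      have hL2 := gini_lip hr0 hr1 hq0 hq1
      have habs2 : |j/t - k'/(t+b)| ≤ b/(t+b) := by
        rw [abs_sub_comm]; exact hstep2
      have tri : |2*(k/(t+a))*(1-k/(t+a)) - 2*(k'/(t+b))*(1-k'/(t+b))| ≤
          2 * (a/(t+a)) + 2 * (b/(t+b)) := by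
        calc |2*(k/(t+a))*(1-k/(t+a)) - 2*(k'/(t+b))*(1-k'/(t+b))|
            ≤ |2*(k/(t+a))*(1-k/(t+a)) - 2*(j/t)*(1-j/t)| +
              |2*(j/t)*(1-j/t) - 2*(k'/(t+b))*(1-k'/(t+b))| := abs_sub_le _ _ _
          _ ≤ 2 * |k/(t+a) - j/t| + 2 * |j/t - k'/(t+b)| := by linarith
          _ ≤ 2 * (a/(t+a)) + 2 * (b/(t+b)) := by
              linarith [mul_le_mul_of_nonneg_left hstep1 (by norm_num : (0:ℝ) ≤ 2),
                mul_le_mul_of_nonneg_left habs2 (by norm_num : (0:ℝ) ≤ 2)]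
      have final : 2 * (a/(t+a)) + 2 * (b/(t+b)) ≤ 2.5 * ((a+b)/(t+a)) := by
        rw [show 2*(a/(t+a)) = (2*a)/(t+a) from (mul_div_assoc 2 a _).symm,
          show 2*(b/(t+b)) = (2*b)/(t+b) from (mul_div_assoc 2 b _).symm,
          show (2.5:ℝ)*((a+b)/(t+a)) = (2.5*(a+b))/(t+a) from (mul_div_assoc 2.5 _ _).symm,
          div_add_div _ _ hn.ne' hn'.ne', div_le_div_iff₀ (by positivity) hn]
        nlinarith [mul_nonneg ha hb, mul_nonneg hb hb, mul_nonneg ha ht0,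
          mul_le_mul_of_nonneg_left hcase.le hb]
      linarith

open Classical in
lemma gini_eq {α : Type*} (S : Multiset (α × Bool)) :
    gini S = 2 * (((S.filter fun e => e.2 = true).card : ℝ)/S.card) *
      (1 - ((S.filter fun e => e.2 = true).card : ℝ)/S.card) := by
  by_cases h : S = 0
  · subst h; simp [gini]
  · simp only [gini, if_neg h]

open Classical in
lemma gini_aux {α : Type*} (S S' : Multiset (α × Bool)) (hle : S'.card ≤ S.card) :
    |gini S - gini S'| ≤
      2.5 * (((S.card : ℝ) + (S'.card : ℝ) - 2 * (((S ∩ S').card : ℕ) : ℝ)) /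
        (max (S.card : ℝ) (S'.card : ℝ))) := by
  classical
  set T : Multiset (α × Bool) := S ∩ S' with hT
  have hTS : T ≤ S := Multiset.inter_le_left
  have hTS' : T ≤ S' := Multiset.inter_le_right
  have hS : (S - T) + T = S := tsub_add_cancel_of_le hTS
  have hS' : (S' - T) + T = S' := tsub_add_cancel_of_le hTS'
  set t := T.card with htdef
  set a := (S - T).card with hadef
  set b := (S' - T).card with hbdef
  set j := (T.filter fun e => e.2 = true).card with hjdef
  set k := (S.filter fun e => e.2 = true).card with hkdef
  set k' := (S'.filter fun e => e.2 = true).card with hkdef'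
  have hn : S.card = a + t := by rw [← Multiset.card_add, hS]
  have hn' : S'.card = b + t := by rw [← Multiset.card_add, hS']
  have hjk : j ≤ k := Multiset.card_le_card (Multiset.filter_le_filter _ hTS)
  have hjk' : j ≤ k' := Multiset.card_le_card (Multiset.filter_le_filter _ hTS')
  have hka : k ≤ j + a := by
    have := congrArg (fun M => (M.filter fun e => e.2 = true).card) hS
    simp only [Multiset.filter_add, Multiset.card_add] at this
    have h2 : ((S - T).filter fun e => e.2 = true).card ≤ a :=
      Multiset.card_le_card (Multiset.filter_le _ _)
    omega
  have hkb : k' ≤ j + b := by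
    have := congrArg (fun M => (M.filter fun e => e.2 = true).card) hS'
    simp only [Multiset.filter_add, Multiset.card_add] at this
    have h2 : ((S' - T).filter fun e => e.2 = true).card ≤ b :=
      Multiset.card_le_card (Multiset.filter_le _ _)
    omega
  have hjt : j ≤ t := Multiset.card_le_card (Multiset.filter_le _ _)
  have hk : k ≤ S.card := Multiset.card_le_card (Multiset.filter_le _ _)
  have hk' : k' ≤ S'.card := Multiset.card_le_card (Multiset.filter_le _ _)
  have hmax : max (S.card : ℝ) (S'.card : ℝ) = (S.card : ℝ) :=
    max_eq_left (Nat.cast_le.2 hle)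
  rw [gini_eq S, gini_eq S', hmax]
  have e1 : (S.card : ℝ) = (t : ℝ) + (a : ℝ) := by rw [hn]; push_cast; ring
  have e2 : (S'.card : ℝ) = (t : ℝ) + (b : ℝ) := by rw [hn']; push_cast; ring
  have e3 : (S.card : ℝ) + (S'.card : ℝ) - 2 * (t : ℝ) = (a : ℝ) + (b : ℝ) := by
    rw [e1, e2]; ring
  rw [e3, e1, e2]
  exact key_est (t : ℝ) (a : ℝ) (b : ℝ) (j : ℝ) (k : ℝ) (k' : ℝ)
    (Nat.cast_nonneg j) (Nat.cast_le.2 hjt) (Nat.cast_le.2 hjk)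
    (by exact_mod_cast hka) (Nat.cast_le.2 hjk') (by exact_mod_cast hkb)
    (Nat.cast_nonneg a) (Nat.cast_nonneg b) (Nat.cast_le.2 (by omega))
    (by rw [← e1]; exact Nat.cast_le.2 hk) (by rw [← e2]; exact Nat.cast_le.2 hk')

/-- |g(S) − g(S')| ≤ 2.5 · Δ*(S,S') where Δ*(S,S') = Δ(S,S')/max(|S|,|S'|)
is the relative edit distance. -/
theorem gini_smooth_rel_edit {α : Type*} (S S' : Multiset (α × Bool)) :
    |gini S - gini S'| ≤ 2.5 * ((editDist S S' : ℝ) / (max S.card S'.card : ℝ)) := by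
  classical
  by_cases h0 : max S.card S'.card = 0
  · have hS : S = 0 := Multiset.card_eq_zero.1 (by omega)
    have hS' : S' = 0 := Multiset.card_eq_zero.1 (by omega)
    subst hS; subst hS'
    simp [gini]
  · have hmaxpos : (0:ℝ) < (max S.card S'.card : ℝ) := by
      exact_mod_cast Nat.pos_of_ne_zero h0
    have hD : (S.card : ℝ) + (S'.card : ℝ) - 2 * (((S ∩ S').card : ℕ) : ℝ) ≤
        (editDist S S' : ℝ) := by
      have h := editDist_bound S S'
      have h2 : ((S.card + S'.card : ℕ) : ℝ) ≤
          ((editDist S S' + 2 * (S ∩ S').card : ℕ) : ℝ) := Nat.cast_le.2 h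
      push_cast at h2
      linarith
    have step2 : 2.5 * (((S.card : ℝ) + (S'.card : ℝ) - 2 * (((S ∩ S').card : ℕ) : ℝ)) /
        (max S.card S'.card : ℝ)) ≤ 2.5 * ((editDist S S' : ℝ) / (max S.card S'.card : ℝ)) := by
      gcongr
    rcases le_total S'.card S.card with hle | hle
    · exact (gini_aux S S' hle).trans step2
    · have key := gini_aux S' S hle
      rw [Multiset.inter_comm] at key
      have e : 2.5 * (((S'.card : ℝ) + (S.card : ℝ) - 2 * (((S ∩ S').card : ℕ) : ℝ)) /
            (max (S'.card : ℝ) (S.card : ℝ))) =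
          2.5 * (((S.card : ℝ) + (S'.card : ℝ) - 2 * (((S ∩ S').card : ℕ) : ℝ)) /
            (max (S.card : ℝ) (S'.card : ℝ))) := by
        rw [max_comm]; ring_nf
      rw [e, abs_sub_comm] at key
      exact key.trans step2
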